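/- arXiv:2211.16007 — 2 statements merged into one kernel-verified Lean document; each statement's English description precedes it below -/
import Mathlib

section
/- Let μ = (μ₁ ≥ ... ≥ μ_s ≥ 1) be a partition with all successive differences μᵢ − μ_{i+1} even for even indices i (dual partition of a symplectic nilpotent type), s ≥ 2. Then ∑ μᵢ² − 2·∑_{i odd} μᵢ > ∑ (μᵢ − μ_{i+1})² (with μ_{s+1}:=0) holds unless μ = (μ₁,1,...,1) is a hook-dual, or μ = (2,2), or μ = (2,2,2). -/
open Finset

def Gf (μ : ℕ → ℤ) (i : ℕ) : ℤ :=
  2 * μ i * μ (i+1) - μ (i+1)^2 - (if Odd i then 2 * μ i else 0)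

lemma Gf_shift (μ : ℕ → ℤ) (i : ℕ) : Gf μ (i+2) = Gf (fun j => μ (j+2)) i := by
  have h : Odd (i+2) ↔ Odd i := by simp [Nat.odd_add]
  simp only [Gf, h]

lemma sum_split (μ : ℕ → ℤ) (s : ℕ) (hs : 2 ≤ s) :
    ∑ i ∈ Icc 1 s, Gf μ i = Gf μ 1 + Gf μ 2 + ∑ i ∈ Icc 1 (s-2), Gf (fun j => μ (j+2)) i := by
  have h1 : Icc 1 s = Ioc 0 s := by rw [← Finset.Icc_add_one_left_eq_Ioc]; rfl
  have h2 : Icc 1 (s-2) = Ioc 0 (s-2) := by rw [← Finset.Icc_add_one_left_eq_Ioc]; rfl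
  rw [h1, h2, ← Finset.sum_Ioc_consecutive _ (by omega : (0:ℕ) ≤ 2) (by omega : 2 ≤ s)]
  have h3 : Ioc 2 s = Finset.map (addLeftEmbedding 2) (Ioc 0 (s-2)) := by
    rw [Finset.map_add_left_Ioc]
    congr 1
    omega
  rw [h3, Finset.sum_map]
  have h4 : (Ioc 0 2 : Finset ℕ) = {1, 2} := rfl
  rw [h4, Finset.sum_pair (by norm_num : (1:ℕ) ≠ 2)]
  congr 1
  apply Finset.sum_congr rfl
  intro i _
  rw [show addLeftEmbedding 2 i = i + 2 from by simp [addLeftEmbedding, Nat.add_comm]]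
  exact Gf_shift μ i

lemma Gf_odd (μ : ℕ → ℤ) (i : ℕ) (h : Odd i) :
    Gf μ i = 2 * μ i * μ (i+1) - μ (i+1)^2 - 2 * μ i := by simp [Gf, h]

lemma Gf_even (μ : ℕ → ℤ) (i : ℕ) (h : ¬ Odd i) :
    Gf μ i = 2 * μ i * μ (i+1) - μ (i+1)^2 := by simp [Gf, h]

lemma key : ∀ s : ℕ, ∀ μ : ℕ → ℤ, 2 ≤ s →
    (∀ i, 1 ≤ i → i < s → μ (i + 1) ≤ μ i) →
    (∀ i, 1 ≤ i → i ≤ s → 1 ≤ μ i) →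
    μ (s + 1) = 0 →
    -2 ≤ ∑ i ∈ Icc 1 s, Gf μ i := by
  intro s
  induction s using Nat.strong_induction_on with
  | _ s ih =>
    intro μ hs hanti hpos hzero
    rcases Nat.lt_or_ge s 4 with h4 | h4
    · -- s = 2 or s = 3
      interval_cases s
      · -- s = 2
        rw [show Icc 1 2 = {1, 2} from rfl, Finset.sum_pair (by norm_num : (1:ℕ) ≠ 2)]
        rw [Gf_odd μ 1 (by decide), Gf_even μ 2 (by decide)]
        have ha := hpos 1 (by norm_num) (by norm_num)
        have hb := hpos 2 (by norm_num) (by norm_num)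
        have hab := hanti 1 (le_refl 1) (by norm_num)
        rw [hzero] at *
        nlinarith [mul_nonneg (sub_nonneg.mpr hab) (by linarith : (0:ℤ) ≤ μ 2 - 1),
          mul_nonneg (by linarith : (0:ℤ) ≤ μ 2 - 1) (by linarith : (0:ℤ) ≤ μ 2 - 1)]
      · -- s = 3
        rw [show Icc 1 3 = {1, 2, 3} from rfl]
        rw [Finset.sum_insert (by decide), Finset.sum_pair (by norm_num : (2:ℕ) ≠ 3)]
        rw [Gf_odd μ 1 (by decide), Gf_even μ 2 (by decide), Gf_odd μ 3 (by decide)]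
        have ha := hpos 1 (by norm_num) (by norm_num)
        have hb := hpos 2 (by norm_num) (by norm_num)
        have hc := hpos 3 (by norm_num) (by norm_num)
        have hab := hanti 1 (le_refl 1) (by norm_num)
        have hbc := hanti 2 (by norm_num) (by norm_num)
        rw [hzero] at *
        nlinarith [mul_nonneg (sub_nonneg.mpr hab) (by linarith : (0:ℤ) ≤ μ 2 - 1),
          mul_nonneg (sub_nonneg.mpr hbc) (by linarith : (0:ℤ) ≤ μ 3 - 1),
          mul_nonneg (by linarith : (0:ℤ) ≤ μ 2 - 1) (by linarith : (0:ℤ) ≤ μ 2 - 1),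
          mul_nonneg (by linarith : (0:ℤ) ≤ μ 3 - 1) (by linarith : (0:ℤ) ≤ μ 2 - μ 3)]
    · -- s ≥ 4
      have hsplit : ∑ i ∈ Icc 1 s, Gf μ i =
          Gf μ 1 + Gf μ 2 + ∑ i ∈ Icc 1 (s-2), Gf (fun j => μ (j+2)) i := sum_split μ s (by omega)
      set μ' := fun j => μ (j+2) with hμ'
      have htail : -2 ≤ ∑ i ∈ Icc 1 (s-2), Gf μ' i := by
        apply ih (s-2) (by omega) μ' (by omega)
        · intro i hi1 hi2
          have := hanti (i+2) (by omega) (by omega)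
          simpa [hμ', show i+2+1 = i+1+2 from by omega] using this
        · intro i hi1 hi2
          exact hpos (i+2) (by omega) (by omega)
        · show μ (s-2+1+2) = 0
          rw [show s-2+1+2 = s+1 from by omega]; exact hzero
      have ha := hpos 1 (by norm_num) (by omega)
      have hb := hpos 2 (by norm_num) (by omega)
      have hc := hpos 3 (by norm_num) (by omega)
      have hab := hanti 1 (le_refl 1) (by omega)
      have hbc := hanti 2 (by norm_num) (by omega)
      have hG12 : 0 ≤ Gf μ 1 + Gf μ 2 := by
        rw [Gf_odd μ 1 (by decide), Gf_even μ 2 (by decide)]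
        rcases eq_or_lt_of_le hb with hb1 | hb2
        · -- μ 2 = 1, hence μ 3 = 1
          have hc1 : μ 3 = 1 := le_antisymm (by linarith) hc
          rw [← hb1, hc1]; ring_nf; nlinarith [ha]
        · -- μ 2 ≥ 2
          nlinarith [mul_nonneg (sub_nonneg.mpr hab) (by linarith : (0:ℤ) ≤ μ 2 - 1),
            mul_nonneg (sub_nonneg.mpr hbc) (by linarith : (0:ℤ) ≤ μ 3),
            mul_nonneg (by linarith : (0:ℤ) ≤ μ 2 - 2) (by linarith : (0:ℤ) ≤ μ 2),
            mul_nonneg (by linarith : (0:ℤ) ≤ μ 3 - 1) (by linarith : (0:ℤ) ≤ μ 2)]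
      rw [hsplit]
      linarith

lemma goal_eq (μ : ℕ → ℤ) (s : ℕ) :
    ∑ i ∈ Icc 1 s, Gf μ i =
      ∑ i ∈ Icc 1 s, (μ i) ^ 2 - 2 * ∑ i ∈ (Icc 1 s).filter (fun i => Odd i), μ i
        - ∑ i ∈ Icc 1 s, (μ i - μ (i + 1)) ^ 2 := by
  rw [Finset.sum_filter, Finset.mul_sum, ← Finset.sum_sub_distrib, ← Finset.sum_sub_distrib]
  apply Finset.sum_congr rfl
  intro i _
  unfold Gf
  split_ifs <;> ring

/-- Combinatorial inequality in Proposition 3.3 (symplectic case): for a partition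
`μ = (μ₁ ≥ … ≥ μ_s ≥ 1)` with `s ≥ 2`, `μ_{s+1} := 0`, and all differences
`μᵢ − μ_{i+1}` even for even `i` (dual partition of a symplectic nilpotent type),
the inequality `∑ μᵢ² − 2∑_{i odd} μᵢ > ∑ (μᵢ − μ_{i+1})²` holds unless `μ` is a
hook-dual partition `(μ₁,1,…,1)`, or `(2,2)`, or `(2,2,2)`. -/
theorem stmt_4 (s : ℕ) (μ : ℕ → ℤ) (hs : 2 ≤ s)
    (hanti : ∀ i, 1 ≤ i → i < s → μ (i + 1) ≤ μ i)
    (hpos : ∀ i, 1 ≤ i → i ≤ s → 1 ≤ μ i)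
    (hzero : μ (s + 1) = 0)
    (hpar : ∀ i, 1 ≤ i → i ≤ s → Even i → Even (μ i - μ (i + 1)))
    (hexc : ¬ ((∀ i, 2 ≤ i → i ≤ s → μ i = 1) ∨
        (s = 2 ∧ μ 1 = 2 ∧ μ 2 = 2) ∨
        (s = 3 ∧ μ 1 = 2 ∧ μ 2 = 2 ∧ μ 3 = 2))) :
    ∑ i ∈ Icc 1 s, (μ i) ^ 2 - 2 * ∑ i ∈ (Icc 1 s).filter (fun i => Odd i), μ i >
      ∑ i ∈ Icc 1 s, (μ i - μ (i + 1)) ^ 2 := by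
  have hA : ¬ (∀ i, 2 ≤ i → i ≤ s → μ i = 1) := fun h => hexc (Or.inl h)
  have hB : ¬ (s = 2 ∧ μ 1 = 2 ∧ μ 2 = 2) := fun h => hexc (Or.inr (Or.inl h))
  have hC : ¬ (s = 3 ∧ μ 1 = 2 ∧ μ 2 = 2 ∧ μ 3 = 2) := fun h => hexc (Or.inr (Or.inr h))
  push_neg at hA
  obtain ⟨w, hw2, hws, hw1⟩ := hA
  suffices h : 1 ≤ ∑ i ∈ Icc 1 s, Gf μ i by
    have := goal_eq μ s
    linarith
  rcases Nat.lt_or_ge s 4 with h4 | h4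
  · interval_cases s
    · -- s = 2
      rw [show Icc 1 2 = {1, 2} from rfl, Finset.sum_pair (by norm_num : (1:ℕ) ≠ 2)]
      rw [Gf_odd μ 1 (by decide), Gf_even μ 2 (by decide)]
      have ha := hpos 1 (by norm_num) (by norm_num)
      have hb := hpos 2 (by norm_num) (by norm_num)
      have hz3 : μ 3 = 0 := by simpa using hzero
      have hab : μ 2 ≤ μ 1 := by simpa using hanti 1 (by norm_num) (by norm_num)
      obtain ⟨k, hk⟩ := hpar 2 (by norm_num) (le_refl 2) (by decide)
      norm_num [hz3] at hk
      rw [hz3]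
      have hw : μ 2 ≠ 1 := by
        have hwe : w = 2 := by omega
        rwa [hwe] at hw1
      have hb2 : 2 ≤ μ 2 := by omega
      rcases eq_or_lt_of_le hb2 with hbe | hb3
      · have ha2 : μ 1 ≠ 2 := fun h => hB ⟨rfl, h, hbe.symm⟩
        have ha3 : 3 ≤ μ 1 := by omega
        rw [← hbe]; nlinarith
      · nlinarith [mul_nonneg (sub_nonneg.mpr hab) (by linarith : (0:ℤ) ≤ μ 2 - 1),
          mul_nonneg (by linarith : (0:ℤ) ≤ μ 2 - 3) (by linarith : (0:ℤ) ≤ μ 2 + 1)]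
    · -- s = 3
      rw [show Icc 1 3 = {1, 2, 3} from rfl]
      rw [Finset.sum_insert (by decide), Finset.sum_pair (by norm_num : (2:ℕ) ≠ 3)]
      rw [Gf_odd μ 1 (by decide), Gf_even μ 2 (by decide), Gf_odd μ 3 (by decide)]
      have ha := hpos 1 (by norm_num) (by norm_num)
      have hb := hpos 2 (by norm_num) (by norm_num)
      have hc := hpos 3 (by norm_num) (by norm_num)
      have hz4 : μ 4 = 0 := by simpa using hzero
      have hab : μ 2 ≤ μ 1 := by simpa using hanti 1 (by norm_num) (by norm_num)
      have hbc : μ 3 ≤ μ 2 := by simpa using hanti 2 (by norm_num) (by norm_num)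
      obtain ⟨k, hk⟩ := hpar 2 (by norm_num) (by norm_num) (by decide)
      norm_num at hk
      rw [hz4]
      have hb2 : 2 ≤ μ 2 := by
        by_contra hcon
        have hb1 : μ 2 = 1 := by omega
        have hc1 : μ 3 = 1 := by omega
        interval_cases w
        · exact hw1 hb1
        · exact hw1 hc1
      rcases eq_or_lt_of_le hb2 with hbe | hb3
      · have hce : μ 3 = 2 := by omega
        have ha2 : μ 1 ≠ 2 := fun h => hC ⟨rfl, h, hbe.symm, hce⟩
        have ha3 : 3 ≤ μ 1 := by omega
        rw [← hbe, hce]; nlinarith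
      · nlinarith [mul_nonneg (sub_nonneg.mpr hab) (by linarith : (0:ℤ) ≤ μ 2 - 1),
          mul_nonneg (sub_nonneg.mpr hbc) (by linarith : (0:ℤ) ≤ μ 3),
          mul_nonneg (by linarith : (0:ℤ) ≤ μ 2 - 3) (by linarith : (0:ℤ) ≤ μ 2),
          mul_nonneg (by linarith : (0:ℤ) ≤ μ 3 - 1) (by linarith : (0:ℤ) ≤ μ 2 - 2)]
  · -- s ≥ 4
    have mono : ∀ i, 2 ≤ i → i ≤ s → μ i ≤ μ 2 := by
      intro i hi
      induction i, hi using Nat.le_induction with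
      | base => intro _; exact le_refl _
      | succ n hn ih =>
        intro hns
        exact le_trans (hanti n (by omega) (by omega)) (ih (by omega))
    have ha := hpos 1 (by norm_num) (by omega)
    have hb := hpos 2 (by norm_num) (by omega)
    have hc := hpos 3 (by norm_num) (by omega)
    have hab : μ 2 ≤ μ 1 := by simpa using hanti 1 (by norm_num) (by omega)
    have hbc : μ 3 ≤ μ 2 := by simpa using hanti 2 (by norm_num) (by omega)
    have hb2 : 2 ≤ μ 2 := by
      by_contra hcon
      have hb1 : μ 2 = 1 := by omega
      have : μ w = 1 := le_antisymm (by rw [← hb1]; exact mono w hw2 hws) (hpos w (by omega) hws)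
      exact hw1 this
    obtain ⟨k, hk⟩ := hpar 2 (by norm_num) (by omega) (by decide)
    norm_num at hk
    have hsplit := sum_split μ s (by omega)
    set μ' := fun j => μ (j+2) with hμ'
    have htail : -2 ≤ ∑ i ∈ Icc 1 (s-2), Gf μ' i := by
      apply key (s-2) μ' (by omega)
      · intro i hi1 hi2
        have := hanti (i+2) (by omega) (by omega)
        simpa [hμ', show i+2+1 = i+1+2 from by omega] using this
      · intro i hi1 hi2
        exact hpos (i+2) (by omega) (by omega)
      · show μ (s-2+1+2) = 0
        rw [show s-2+1+2 = s+1 from by omega]; exact hzero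
    have hG12 : 3 ≤ Gf μ 1 + Gf μ 2 := by
      rw [Gf_odd μ 1 (by decide), Gf_even μ 2 (by decide)]
      norm_num
      rcases eq_or_lt_of_le hbc with hce | hlt
      · nlinarith [mul_nonneg (by linarith : (0:ℤ) ≤ μ 1 - 2) (by linarith : (0:ℤ) ≤ μ 2 - 1)]
      · have hc2 : μ 3 + 2 ≤ μ 2 := by omega
        nlinarith [mul_nonneg (sub_nonneg.mpr hab) (by linarith : (0:ℤ) ≤ μ 2 - 1),
          mul_nonneg (by linarith : (0:ℤ) ≤ μ 2 - 3) (by linarith : (0:ℤ) ≤ μ 2),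
          mul_nonneg (by linarith : (0:ℤ) ≤ μ 2 - μ 3 - 2) (by linarith : (0:ℤ) ≤ μ 3),
          mul_nonneg (by linarith : (0:ℤ) ≤ μ 3 - 1) (by linarith : (0:ℤ) ≤ μ 2 + 2)]
    rw [hsplit]
    linarith
end

section
/- If μ = (μ₁ ≥ ... ≥ μ_s ≥ 1) is a partition satisfying ∑ μᵢ² − ∑ μᵢ > ∑ (μᵢ − μ_{i+1})² + μ₁ − 2 (μ_{s+1}:=0), then the extended partition μ' = (μ₁,...,μ_s,μ_{s+1}') with μ_s ≥ μ_{s+1}' ≥ 1 and (μ_s, μ_{s+1}') ≠ (1,1) also satisfies the corresponding inequality. -/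
open Finset

/-- The inequality of Proposition 3.1 for a partition `μ` of length `s`
(with `μ_{s+1} := 0`). -/
def glIneq (s : ℕ) (μ : ℕ → ℤ) : Prop :=
  ∑ i ∈ Icc 1 s, (μ i) ^ 2 - ∑ i ∈ Icc 1 s, μ i >
    ∑ i ∈ Icc 1 s, (μ i - μ (i + 1)) ^ 2 + μ 1 - 2

/-- Inductive step of Proposition 3.1: if `μ = (μ₁ ≥ … ≥ μ_s ≥ 1)` satisfies the
inequality, then appending a part `b` with `1 ≤ b ≤ μ_s` and `(μ_s, b) ≠ (1,1)`
yields a partition again satisfying the inequality. -/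
theorem stmt_16 (s : ℕ) (μ : ℕ → ℤ) (b : ℤ) (hs : 1 ≤ s)
    (hanti : ∀ i, 1 ≤ i → i < s → μ (i + 1) ≤ μ i)
    (hpos : ∀ i, 1 ≤ i → i ≤ s → 1 ≤ μ i)
    (hzero : ∀ i, s < i → μ i = 0)
    (hb1 : 1 ≤ b) (hbs : b ≤ μ s) (hne : ¬ (μ s = 1 ∧ b = 1))
    (hineq : glIneq s μ) :
    glIneq (s + 1) (Function.update μ (s + 1) b) := by
  obtain ⟨t, rfl⟩ : ∃ t, s = t + 1 := ⟨s - 1, by omega⟩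
  have hm : 1 ≤ μ (t + 1) := hpos (t + 1) (by omega) le_rfl
  have hz2 : μ (t + 2) = 0 := hzero _ (by omega)
  have hz3 : μ (t + 3) = 0 := hzero _ (by omega)
  set ν : ℕ → ℤ := Function.update μ (t + 1 + 1) b with hν
  have hνeq : ∀ i, i ≠ t + 2 → ν i = μ i := fun i hi => Function.update_of_ne hi _ _
  have hνtop : ν (t + 2) = b := Function.update_self _ _ _
  unfold glIneq at hineq ⊢
  simp only [show t + 1 + 1 = t + 2 from rfl, show t + 2 + 1 = t + 3 from rfl] at hineq ⊢
  have hsplit : ∑ i ∈ Icc 1 (t + 1), μ i ^ 2 = (∑ i ∈ Icc 1 t, μ i ^ 2) + μ (t + 1) ^ 2 :=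
    Finset.sum_Icc_succ_top (by omega) _
  have hdsplit : ∑ i ∈ Icc 1 (t + 1), (μ i - μ (i + 1)) ^ 2
      = (∑ i ∈ Icc 1 t, (μ i - μ (i + 1)) ^ 2) + μ (t + 1) ^ 2 := by
    rw [Finset.sum_Icc_succ_top (by omega : 1 ≤ t + 1)]
    simp only [show (t + 1) + 1 = t + 2 from rfl]
    rw [hz2, sub_zero]
  have e1 : ∑ i ∈ Icc 1 (t + 2), ν i ^ 2 = (∑ i ∈ Icc 1 (t + 1), μ i ^ 2) + b ^ 2 := by
    rw [Finset.sum_Icc_succ_top (by omega : 1 ≤ t + 2), hνtop]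
    congr 1
    refine Finset.sum_congr rfl fun i hi => ?_
    simp only [Finset.mem_Icc] at hi
    rw [hνeq i (by omega)]
  have e2 : ∑ i ∈ Icc 1 (t + 2), ν i = (∑ i ∈ Icc 1 (t + 1), μ i) + b := by
    rw [Finset.sum_Icc_succ_top (by omega : 1 ≤ t + 2), hνtop]
    congr 1
    refine Finset.sum_congr rfl fun i hi => ?_
    simp only [Finset.mem_Icc] at hi
    rw [hνeq i (by omega)]
  have e3 : ∑ i ∈ Icc 1 (t + 2), (ν i - ν (i + 1)) ^ 2
      = (∑ i ∈ Icc 1 t, (μ i - μ (i + 1)) ^ 2) + (μ (t + 1) - b) ^ 2 + b ^ 2 := by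
    rw [Finset.sum_Icc_succ_top (by omega : 1 ≤ t + 2),
        Finset.sum_Icc_succ_top (by omega : 1 ≤ t + 1)]
    simp only [show (t + 1) + 1 = t + 2 from rfl, show (t + 2) + 1 = t + 3 from rfl]
    rw [hνtop, hνeq (t + 1) (by omega), hνeq (t + 3) (by omega), hz3, sub_zero]
    congr 2
    refine Finset.sum_congr rfl fun i hi => ?_
    simp only [Finset.mem_Icc] at hi
    rw [hνeq i (by omega), hνeq (i + 1) (by omega)]
  have e4 : ν 1 = μ 1 := hνeq 1 (by omega)
  rw [e1, e2, e3, e4]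
  nlinarith [mul_nonneg (by linarith : (0:ℤ) ≤ b) (by linarith : (0:ℤ) ≤ 2 * μ (t + 1) - b - 1), hsplit, hdsplit]
end
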